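/- Let V be a nonempty finite set and for each y ∈ V let W(·|y) be a probability measure on a measurable space X. Let Q := (1/|V|) Σ_{y∈V} W(·|y), assume each W(·|y) ≪ Q with ι(y,x) := log (dW(·|y)/dQ)(x), let Y be uniform on V and, conditionally on Y, X ∼ W(·|Y). Suppose there exist m ∈ ℝ, a real D ≥ 1, and c > 0 such that P[ ι(Y,X) − m ≥ t ] ≤ 2 exp(−c min{t²/D, t}) for all t ≥ 0. Let n ≥ 1, let Y₁,…,Y_n be i.i.d. uniform on V, and let P_n := (1/n) Σ_{i=1}^n W(·|Y_i). Then for every a ≥ 0, setting t := max{log n − m − a, 0}, one has E[ KL(P_n ‖ Q) ] ≤ e^{−a} + 2 log(1+|V|) · exp(−c min{t²/D, t}). -/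

import Mathlib

open MeasureTheory
open scoped ENNReal

/-- Kullback–Leibler divergence `∫ log(dP/dQ) dP`. -/
noncomputable def KL {X : Type*} [MeasurableSpace X] (P Q : Measure X) : ℝ :=
  ∫ x, Real.log ((P.rnDeriv Q x).toReal) ∂P

lemma aux_sum_pi_apply {V : Type*} [Fintype V] {n : ℕ} (i : Fin n) (F : V → ℝ) :
    ∑ ys : Fin n → V, F (ys i) = (Fintype.card V : ℝ) ^ (n - 1) * ∑ y, F y := by
  classical
  have h1 : ∑ ys : Fin n → V, F (ys i) = ∑ p : V × ({j : Fin n // j ≠ i} → V), F p.1 :=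
    Fintype.sum_equiv (Equiv.piSplitAt i fun _ => V) _ _ (fun ys => rfl)
  rw [h1, Fintype.sum_prod_type]
  simp only [Finset.sum_const, Finset.card_univ, nsmul_eq_mul]
  rw [← Finset.mul_sum]
  congr 2
  rw [Fintype.card_fun, Fintype.card_subtype_compl]
  simp [Fintype.card_fin]

lemma aux_sum_pi_apply2 {V : Type*} [Fintype V] {n : ℕ} {i j : Fin n} (hij : i ≠ j)
    (A : V → V → ℝ) (hA : ∀ y, ∑ z, A y z = 0) :
    ∑ ys : Fin n → V, A (ys i) (ys j) = 0 := by
  classical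
  have h1 : ∑ ys : Fin n → V, A (ys i) (ys j)
      = ∑ p : V × ({k : Fin n // k ≠ j} → V), A (p.2 ⟨i, hij⟩) p.1 :=
    Fintype.sum_equiv (Equiv.piSplitAt j fun _ => V) _ _ (fun ys => rfl)
  rw [h1, Fintype.sum_prod_type, Finset.sum_comm]
  simp [hA]

lemma aux_rnDeriv_fsum {X : Type*} [MeasurableSpace X] (Q : Measure X) [SigmaFinite Q]
    {ι : Type*} (s : Finset ι) (μ : ι → Measure X) [∀ i, IsFiniteMeasure (μ i)] :
    (∑ i ∈ s, μ i).rnDeriv Q =ᵐ[Q] fun x => ∑ i ∈ s, (μ i).rnDeriv Q x := by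
  classical
  induction s using Finset.induction with
  | empty =>
    simp only [Finset.sum_empty]
    filter_upwards [Measure.rnDeriv_zero Q] with x hx using by simp [hx]
  | insert b s h ih =>
    rw [Finset.sum_insert h]
    refine (Measure.rnDeriv_add _ _ Q).trans ?_
    filter_upwards [ih] with x hx
    simp [Finset.sum_insert h, hx]

lemma aux_abs_log_mul_le {u Kr : ℝ} (hu : 0 ≤ u) (hle : u ≤ Kr) :
    |Real.log u * u| ≤ 1 + Kr * Kr := by
  have hK0 : 0 ≤ Kr := hu.trans hle
  rcases eq_or_lt_of_le hu with h0 | hupos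
  · simp [← h0]; positivity
  rcases le_or_gt u 1 with h1 | h1
  · have hlog : Real.log u ≤ 0 := Real.log_nonpos (le_of_lt hupos) h1
    have h2 : Real.log u⁻¹ ≤ u⁻¹ - 1 := Real.log_le_sub_one_of_pos (by positivity)
    rw [Real.log_inv] at h2
    have h3 : -Real.log u * u ≤ (u⁻¹ - 1) * u := by nlinarith
    have h4 : (u⁻¹ - 1) * u = 1 - u := by field_simp
    rw [abs_of_nonpos (mul_nonpos_of_nonpos_of_nonneg hlog hu)]
    nlinarith
  · have hlog : 0 ≤ Real.log u := Real.log_nonneg (le_of_lt h1)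
    have h2 : Real.log u ≤ u - 1 := Real.log_le_sub_one_of_pos hupos
    rw [abs_of_nonneg (mul_nonneg hlog hu)]
    nlinarith

theorem stmt5 {V X : Type*} [Fintype V] [Nonempty V] [MeasurableSpace X]
    (W : V → Measure X) [∀ y, IsProbabilityMeasure (W y)]
    (Q : Measure X) (hQdef : Q = (Fintype.card V : ℝ≥0∞)⁻¹ • ∑ y, W y)
    (hac : ∀ y, W y ≪ Q)
    (m D c : ℝ) (hD : 1 ≤ D) (hc : 0 < c)
    (htail : ∀ t : ℝ, 0 ≤ t →
      (Fintype.card V : ℝ)⁻¹ *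
          ∑ y, ((W y) {x | m + t ≤ Real.log (((W y).rnDeriv Q) x).toReal}).toReal
        ≤ 2 * Real.exp (-c * min (t ^ 2 / D) t))
    (n : ℕ) (hn : 1 ≤ n) (a : ℝ) (ha : 0 ≤ a) :
    (Fintype.card V : ℝ)⁻¹ ^ n *
        ∑ ys : Fin n → V, KL ((n : ℝ≥0∞)⁻¹ • ∑ i, W (ys i)) Q
      ≤ Real.exp (-a) +
        2 * Real.log (1 + Fintype.card V) *
          Real.exp (-c * min ((max (Real.log n - m - a) 0) ^ 2 / D)
            (max (Real.log n - m - a) 0)) := by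
  classical
  have hcard1 : 1 ≤ Fintype.card V := Fintype.card_pos
  have hKpos : (0:ℝ) < (Fintype.card V : ℝ) := by exact_mod_cast Fintype.card_pos
  set K : ℝ := (Fintype.card V : ℝ) with hKdef
  have hK1 : 1 ≤ K := by rw [hKdef]; exact_mod_cast hcard1
  have hcard0 : (Fintype.card V : ℝ≥0∞) ≠ 0 := by
    simp [Fintype.card_ne_zero]
  have hcardtop : (Fintype.card V : ℝ≥0∞) ≠ ∞ := by simp
  have hnR : (0:ℝ) < (n:ℝ) := by exact_mod_cast hn
  have hn0 : (n:ℝ≥0∞) ≠ 0 := Nat.cast_ne_zero.mpr (by omega)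
  have hntop : (n:ℝ≥0∞) ≠ ∞ := by simp
  set t : ℝ := max (Real.log n - m - a) 0 with htdef
  have ht0 : 0 ≤ t := le_max_right _ _
  set L : ℝ := Real.log (1 + K) with hLdef
  have hL0 : 0 ≤ L := Real.log_nonneg (by linarith)
  set E : ℝ := Real.exp (-c * min (t ^ 2 / D) t) with hEdef
  have hE0 : 0 < E := Real.exp_pos _
  -- Q is a probability measure
  haveI hQprob : IsProbabilityMeasure Q := by
    constructor
    rw [hQdef]
    simp only [Measure.smul_apply, Measure.coe_finset_sum, Finset.sum_apply, measure_univ,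
      smul_eq_mul]
    rw [Finset.sum_const, Finset.card_univ, nsmul_eq_mul, mul_one,
      ENNReal.inv_mul_cancel hcard0 hcardtop]
  set g : V → X → ℝ := fun y x => ((W y).rnDeriv Q x).toReal with hgdef
  have hgmeas : ∀ y, Measurable (g y) := fun y => (Measure.measurable_rnDeriv _ _).ennreal_toReal
  have hg0 : ∀ z x, 0 ≤ g z x := fun z x => ENNReal.toReal_nonneg
  set B : V → Set X := fun y => {x | m + t ≤ Real.log (g y x)} with hBdef
  have hBmeas : ∀ y, MeasurableSet (B y) :=
    fun y => measurableSet_le measurable_const (Real.measurable_log.comp (hgmeas y))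
  -- sum of rnDerivs is the cardinality, a.e.
  have hsumW : ∑ z, W z = (Fintype.card V : ℝ≥0∞) • Q := by
    rw [hQdef, smul_smul, ENNReal.mul_inv_cancel hcard0 hcardtop, one_smul]
  have hsumf : ∀ᵐ x ∂Q, ∑ z, (W z).rnDeriv Q x = (Fintype.card V : ℝ≥0∞) := by
    have h1 := aux_rnDeriv_fsum Q Finset.univ W
    rw [hsumW] at h1
    have h2 := Measure.rnDeriv_smul_left_of_ne_top Q Q (r := (Fintype.card V : ℝ≥0∞)) hcardtop
    have h3 := Measure.rnDeriv_self Q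
    filter_upwards [h1, h2, h3] with x hx1 hx2 hx3
    rw [← hx1, hx2]
    simp [hx3]
  have hfltall : ∀ᵐ x ∂Q, ∀ z, (W z).rnDeriv Q x < ∞ :=
    ae_all_iff.mpr fun z => Measure.rnDeriv_lt_top _ _
  have hgle : ∀ᵐ x ∂Q, ∀ z, g z x ≤ K := by
    filter_upwards [hsumf] with x hx z
    have : (W z).rnDeriv Q x ≤ (Fintype.card V : ℝ≥0∞) := by
      rw [← hx]
      exact Finset.single_le_sum (f := fun z => (W z).rnDeriv Q x)
        (fun _ _ => zero_le) (Finset.mem_univ z)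
    simpa [hKdef] using ENNReal.toReal_mono hcardtop this
  have hgsum : ∀ᵐ x ∂Q, ∑ z, g z x = K := by
    filter_upwards [hsumf, hfltall] with x hx hxf
    rw [hgdef]
    simp only
    rw [← ENNReal.toReal_sum (fun z _ => (hxf z).ne), hx]
    simp [hKdef]
  -- integrability of g z - 1 against W y
  have hgint : ∀ y z, Integrable (fun x => g z x - 1) (W y) := by
    intro y z
    refine (Integrable.mono' (integrable_const (K + 1))
      ((hgmeas z).aestronglyMeasurable) ?_).sub (integrable_const 1)
    filter_upwards [(hgle).filter_mono (hac y).ae_le] with x hx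
    rw [Real.norm_eq_abs, abs_of_nonneg (hg0 z x)]
    have := hx z
    linarith
  -- the key quantities
  set bad : V → ℝ := fun y => ((W y) (B y)).toReal with hbaddef
  have hbad0 : ∀ y, 0 ≤ bad y := fun y => ENNReal.toReal_nonneg
  set A : V → V → ℝ := fun y z => ∫ x, ((B y)ᶜ).indicator (fun x => g z x - 1) x ∂(W y)
    with hAdef
  have hbadle : K⁻¹ * ∑ y, bad y ≤ 2 * E := htail t ht0
  have hA_sum : ∀ y, ∑ z, A y z = 0 := by
    intro y
    rw [hAdef]
    rw [← integral_finset_sum Finset.univ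
      (fun z _ => (hgint y z).indicator (hBmeas y).compl)]
    have hzero : (fun x => ∑ z, ((B y)ᶜ).indicator (fun x => g z x - 1) x) =ᵐ[W y]
        (fun _ => (0:ℝ)) := by
      filter_upwards [(hgsum).filter_mono (hac y).ae_le] with x hx
      by_cases hxB : x ∈ (B y)ᶜ
      · simp only [Set.indicator_of_mem hxB]
        rw [Finset.sum_sub_distrib, hx]
        simp [hKdef]
      · simp [Set.indicator_of_notMem hxB]
    rw [integral_congr_ae hzero]
    simp
  have hA_self : ∀ y, A y y ≤ Real.exp (m + t) := by
    intro y
    have hle : ∀ x, ((B y)ᶜ).indicator (fun x => g y x - 1) x ≤ Real.exp (m + t) := by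
      intro x
      by_cases hxB : x ∈ (B y)ᶜ
      · rw [Set.indicator_of_mem hxB]
        have hlt : Real.log (g y x) < m + t := not_le.mp hxB
        rcases eq_or_lt_of_le (hg0 y x) with h0 | hpos
        · rw [← h0]
          have := Real.exp_pos (m + t)
          linarith
        · have : g y x ≤ Real.exp (m + t) := by
            rw [← Real.exp_log hpos]
            exact Real.exp_le_exp.mpr (le_of_lt hlt)
          linarith
      · rw [Set.indicator_of_notMem hxB]
        exact (Real.exp_pos _).le
    calc A y y ≤ ∫ _, Real.exp (m + t) ∂(W y) :=
          integral_mono_ae ((hgint y y).indicator (hBmeas y).compl)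
            (integrable_const _) (ae_of_all _ hle)
      _ = Real.exp (m + t) := by simp
  -- per-codebook bound
  have main : ∀ ys : Fin n → V,
      (KL ((n : ℝ≥0∞)⁻¹ • ∑ i, W (ys i)) Q ≤ L) ∧
      (KL ((n : ℝ≥0∞)⁻¹ • ∑ i, W (ys i)) Q
        ≤ (n:ℝ)⁻¹ * ∑ i, ((n:ℝ)⁻¹ * ∑ j, A (ys i) (ys j) + L * bad (ys i))) := by
    intro ys
    set P : Measure X := (n : ℝ≥0∞)⁻¹ • ∑ i, W (ys i) with hPdef
    haveI hPprob : IsProbabilityMeasure P := by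
      constructor
      rw [hPdef]
      simp only [Measure.smul_apply, Measure.coe_finset_sum, Finset.sum_apply, measure_univ,
        smul_eq_mul]
      rw [Finset.sum_const, Finset.card_univ, nsmul_eq_mul, mul_one, Fintype.card_fin,
        ENNReal.inv_mul_cancel hn0 hntop]
    have hPac : P ≪ Q := by
      refine Measure.AbsolutelyContinuous.mk (fun s hs hs0 => ?_)
      rw [hPdef]
      simp only [Measure.smul_apply, Measure.coe_finset_sum, Finset.sum_apply, smul_eq_mul]
      have : ∀ i : Fin n, W (ys i) s = 0 := fun i => hac (ys i) hs0
      simp [this]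
    have hrP : P.rnDeriv Q =ᵐ[Q] fun x => (n:ℝ≥0∞)⁻¹ * ∑ i, (W (ys i)).rnDeriv Q x := by
      have h1 := Measure.rnDeriv_smul_left_of_ne_top (∑ i, W (ys i)) Q
        (r := (n:ℝ≥0∞)⁻¹) (ENNReal.inv_ne_top.mpr hn0)
      have h2 := aux_rnDeriv_fsum Q Finset.univ (fun i => W (ys i))
      rw [hPdef]
      filter_upwards [h1, h2] with x hx1 hx2
      simp only [hx1, Pi.smul_apply, smul_eq_mul]
      rw [hx2]
    set sfun : X → ℝ := fun x => (n:ℝ)⁻¹ * ∑ i, g (ys i) x with hsfundef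
    have hsmeas : Measurable sfun :=
      (Finset.measurable_sum Finset.univ fun i _ => hgmeas (ys i)).const_mul _
    have hsnn : ∀ x, 0 ≤ sfun x := fun x =>
      mul_nonneg (by positivity) (Finset.sum_nonneg fun i _ => hg0 _ _)
    have hs_eq : ∀ᵐ x ∂Q, (P.rnDeriv Q x).toReal = sfun x := by
      filter_upwards [hrP, hfltall] with x hx1 hx2
      rw [hx1, ENNReal.toReal_mul, ENNReal.toReal_sum (fun i _ => (hx2 (ys i)).ne)]
      simp [hsfundef]
      exact Or.inl rfl
    have hsle : ∀ᵐ x ∂Q, sfun x ≤ K := by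
      filter_upwards [hgle] with x hx
      calc (n:ℝ)⁻¹ * ∑ i, g (ys i) x ≤ (n:ℝ)⁻¹ * ∑ _i : Fin n, K := by
            gcongr with i
            exact hx (ys i)
        _ = K := by
            rw [Finset.sum_const, Finset.card_univ, Fintype.card_fin, nsmul_eq_mul]
            field_simp
    have hrmeas : Measurable (P.rnDeriv Q) := Measure.measurable_rnDeriv _ _
    have hmeash : Measurable (fun x => Real.log ((P.rnDeriv Q x).toReal)) :=
      Real.measurable_log.comp hrmeas.ennreal_toReal
    have hrtoReal_le : ∀ᵐ x ∂Q, (P.rnDeriv Q x).toReal ≤ K := by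
      filter_upwards [hs_eq, hsle] with x h1 h2
      rw [h1]; exact h2
    have hint : Integrable (fun x => Real.log ((P.rnDeriv Q x).toReal)) P := by
      have h1 : Integrable (fun x => Real.log ((P.rnDeriv Q x).toReal))
          (Q.withDensity (P.rnDeriv Q)) := by
        rw [integrable_withDensity_iff hrmeas (Measure.rnDeriv_lt_top _ _)]
        refine Integrable.mono' (integrable_const (1 + K * K))
          (hmeash.mul hrmeas.ennreal_toReal).aestronglyMeasurable ?_
        filter_upwards [hrtoReal_le] with x hx
        rw [Real.norm_eq_abs]
        exact aux_abs_log_mul_le ENNReal.toReal_nonneg hx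
      rwa [Measure.withDensity_rnDeriv_eq P Q hPac] at h1
    have hWleP : ∀ i : Fin n, W (ys i) ≤ (n:ℝ≥0∞) • P := by
      intro i
      refine Measure.le_intro (fun s hs _ => ?_)
      rw [hPdef]
      simp only [Measure.smul_apply, Measure.coe_finset_sum, Finset.sum_apply, smul_eq_mul]
      rw [← mul_assoc, ENNReal.mul_inv_cancel hn0 hntop, one_mul]
      exact Finset.single_le_sum (f := fun j => (W (ys j)) s)
        (fun _ _ => zero_le) (Finset.mem_univ i)
    have hint_i : ∀ i : Fin n,
        Integrable (fun x => Real.log ((P.rnDeriv Q x).toReal)) (W (ys i)) :=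
      fun i => (hint.smul_measure hntop).mono_measure (hWleP i)
    have hKLdecomp : KL P Q
        = (n:ℝ)⁻¹ * ∑ i, ∫ x, Real.log ((P.rnDeriv Q x).toReal) ∂(W (ys i)) := by
      rw [KL, hPdef]
      rw [integral_smul_measure, integral_finset_sum_measure (fun i _ => hint_i i)]
      simp [ENNReal.toReal_inv]
      exact Or.inl rfl
    constructor
    · -- crude bound
      have hb : ∀ᵐ x ∂P, Real.log ((P.rnDeriv Q x).toReal) ≤ L := by
        filter_upwards [hrtoReal_le.filter_mono hPac.ae_le] with x hx
        rcases eq_or_lt_of_le (ENNReal.toReal_nonneg :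
            (0:ℝ) ≤ (P.rnDeriv Q x).toReal) with h0 | hpos
        · rw [← h0, Real.log_zero]; exact hL0
        · rw [hLdef]
          exact Real.log_le_log hpos (by linarith)
      calc KL P Q ≤ ∫ _, L ∂P := integral_mono_ae hint (integrable_const L) hb
        _ = L := by simp
    · -- refined bound
      have hper : ∀ i : Fin n, ∫ x, Real.log ((P.rnDeriv Q x).toReal) ∂(W (ys i))
          ≤ (n:ℝ)⁻¹ * ∑ j, A (ys i) (ys j) + L * bad (ys i) := by
        intro i
        set y := ys i with hydef
        have hsint : Integrable sfun (W y) := by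
          refine Integrable.mono' (integrable_const K) hsmeas.aestronglyMeasurable ?_
          filter_upwards [hsle.filter_mono (hac y).ae_le] with x hx
          rw [Real.norm_eq_abs, abs_of_nonneg (hsnn x)]; exact hx
        set ψ : X → ℝ := fun x => ((B y)ᶜ).indicator (fun x => sfun x - 1) x
          + (B y).indicator (fun _ => L) x with hψdef
        have hψint1 : Integrable (((B y)ᶜ).indicator (fun x => sfun x - 1)) (W y) :=
          (hsint.sub (integrable_const 1)).indicator (hBmeas y).compl
        have hψint2 : Integrable ((B y).indicator (fun _ => L)) (W y) :=
          (integrable_const L).indicator (hBmeas y)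
        have hψint : Integrable ψ (W y) := hψint1.add hψint2
        have hgypos : ∀ᵐ x ∂(W y), 0 < g y x := by
          have h1 := Measure.rnDeriv_pos (hac y)
          have h2 := (Measure.rnDeriv_lt_top (W y) Q).filter_mono (hac y).ae_le
          filter_upwards [h1, h2] with x hx1 hx2
          exact ENNReal.toReal_pos hx1.ne' hx2.ne
        have hpt : ∀ᵐ x ∂(W y),
            Real.log ((P.rnDeriv Q x).toReal) ≤ ψ x := by
          filter_upwards [hs_eq.filter_mono (hac y).ae_le, hgypos,
            hrtoReal_le.filter_mono (hac y).ae_le] with x hx1 hx2 hx3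
          by_cases hxB : x ∈ B y
          · have : ψ x = L := by
              rw [hψdef]
              simp [Set.indicator_of_notMem (by simpa using hxB : x ∉ (B y)ᶜ),
                Set.indicator_of_mem hxB]
            rw [this]
            rcases eq_or_lt_of_le (ENNReal.toReal_nonneg :
                (0:ℝ) ≤ (P.rnDeriv Q x).toReal) with h0 | hpos
            · rw [← h0, Real.log_zero]; exact hL0
            · rw [hLdef]; exact Real.log_le_log hpos (by linarith)
          · have hxBc : x ∈ (B y)ᶜ := hxB
            have : ψ x = sfun x - 1 := by
              rw [hψdef]
              simp [Set.indicator_of_mem hxBc, Set.indicator_of_notMem hxB]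
            rw [this, hx1]
            have hspos : 0 < sfun x := by
              have hterm : g y x ≤ ∑ j, g (ys j) x :=
                Finset.single_le_sum (fun j _ => hg0 (ys j) x) (Finset.mem_univ i)
              have : 0 < ∑ j, g (ys j) x := lt_of_lt_of_le hx2 hterm
              rw [hsfundef]
              positivity
            exact Real.log_le_sub_one_of_pos hspos
        have hsplit : (((B y)ᶜ).indicator (fun x => sfun x - 1))
            = fun x => (n:ℝ)⁻¹ * ∑ j, ((B y)ᶜ).indicator (fun x => g (ys j) x - 1) x := by
          funext x
          by_cases hx : x ∈ (B y)ᶜ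
          · simp only [Set.indicator_of_mem hx]
            rw [Finset.sum_sub_distrib]
            rw [hsfundef]
            simp only [Finset.sum_const, Finset.card_univ, Fintype.card_fin, nsmul_eq_mul,
              mul_one]
            rw [mul_sub]
            congr 1
            field_simp
          · simp [Set.indicator_of_notMem hx]
        calc ∫ x, Real.log ((P.rnDeriv Q x).toReal) ∂(W y)
            ≤ ∫ x, ψ x ∂(W y) := integral_mono_ae (hint_i i) hψint hpt
          _ = (∫ x, ((B y)ᶜ).indicator (fun x => sfun x - 1) x ∂(W y))
              + ∫ x, (B y).indicator (fun _ => L) x ∂(W y) :=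
            integral_add hψint1 hψint2
          _ = (n:ℝ)⁻¹ * ∑ j, A y (ys j) + L * bad y := by
            congr 1
            · rw [hsplit, integral_const_mul,
                integral_finset_sum Finset.univ
                  (fun j _ => (hgint y (ys j)).indicator (hBmeas y).compl)]
            · rw [integral_indicator_const L (hBmeas y), hbaddef]
              simp [mul_comm, Measure.real]
      rw [hKLdecomp]
      have hsum := Finset.sum_le_sum (fun i (_ : i ∈ Finset.univ) => hper i)
      calc (n:ℝ)⁻¹ * ∑ i, ∫ x, Real.log ((P.rnDeriv Q x).toReal) ∂(W (ys i))
          ≤ (n:ℝ)⁻¹ * ∑ i, ((n:ℝ)⁻¹ * ∑ j, A (ys i) (ys j) + L * bad (ys i)) := by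
            gcongr with i _
        _ = _ := rfl
  rcases le_or_gt 0 (Real.log n - m - a) with hcase | hcase
  · -- main case : t = log n - m - a
    have hmt : Real.exp (m + t) = n * Real.exp (-a) := by
      rw [htdef, max_eq_left hcase,
        show m + (Real.log n - m - a) = Real.log n + (-a) by ring, Real.exp_add,
        Real.exp_log hnR]
    have hsum_le : ∑ ys : Fin n → V, KL ((n : ℝ≥0∞)⁻¹ • ∑ i, W (ys i)) Q
        ≤ ∑ ys : Fin n → V,
            (n:ℝ)⁻¹ * ∑ i, ((n:ℝ)⁻¹ * ∑ j, A (ys i) (ys j) + L * bad (ys i)) :=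
      Finset.sum_le_sum fun ys _ => (main ys).2
    have hAsumys : ∀ i j : Fin n, ∑ ys : Fin n → V, A (ys i) (ys j)
        = if j = i then K ^ (n-1) * ∑ y, A y y else 0 := by
      intro i j
      by_cases hij : j = i
      · subst hij
        rw [if_pos rfl]
        exact aux_sum_pi_apply j (fun y => A y y)
      · rw [if_neg hij]
        exact aux_sum_pi_apply2 (fun h => hij h.symm) A hA_sum
    have htotal : ∑ ys : Fin n → V,
          (n:ℝ)⁻¹ * ∑ i, ((n:ℝ)⁻¹ * ∑ j, A (ys i) (ys j) + L * bad (ys i))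
        = (n:ℝ)⁻¹ * (K ^ (n-1) * ∑ y, A y y) + L * (K ^ (n-1) * ∑ y, bad y) := by
      rw [← Finset.mul_sum, Finset.sum_comm]
      have hinner : ∀ i : Fin n, ∑ ys : Fin n → V,
          ((n:ℝ)⁻¹ * ∑ j, A (ys i) (ys j) + L * bad (ys i))
          = (n:ℝ)⁻¹ * (K ^ (n-1) * ∑ y, A y y) + L * (K ^ (n-1) * ∑ y, bad y) := by
        intro i
        rw [Finset.sum_add_distrib, ← Finset.mul_sum, ← Finset.mul_sum, Finset.sum_comm]
        congr 2
        · rw [Finset.sum_congr rfl (fun j _ => hAsumys i j)]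
          simp
        · exact aux_sum_pi_apply i bad
      rw [Finset.sum_congr rfl (fun i _ => hinner i), Finset.sum_const, Finset.card_univ,
        Fintype.card_fin, nsmul_eq_mul, ← mul_assoc, inv_mul_cancel₀ (ne_of_gt hnR), one_mul]
    have hKpow : K⁻¹ ^ n * K ^ (n-1) = K⁻¹ := by
      obtain ⟨p, hp⟩ : ∃ p, n = p + 1 := ⟨n - 1, by omega⟩
      subst hp
      simp only [Nat.add_sub_cancel]
      rw [pow_succ, mul_right_comm, ← mul_pow, inv_mul_cancel₀ (ne_of_gt hKpos), one_pow,
        one_mul]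
    have hAsum_le : ∑ y, A y y ≤ K * (n * Real.exp (-a)) := by
      calc ∑ y, A y y ≤ ∑ _y : V, Real.exp (m+t) := Finset.sum_le_sum fun y _ => hA_self y
        _ = K * Real.exp (m+t) := by
            rw [Finset.sum_const, Finset.card_univ, nsmul_eq_mul]
        _ = K * (n * Real.exp (-a)) := by rw [hmt]
    calc K⁻¹ ^ n * ∑ ys : Fin n → V, KL ((n : ℝ≥0∞)⁻¹ • ∑ i, W (ys i)) Q
        ≤ K⁻¹ ^ n * ∑ ys : Fin n → V,
            (n:ℝ)⁻¹ * ∑ i, ((n:ℝ)⁻¹ * ∑ j, A (ys i) (ys j) + L * bad (ys i)) :=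
          mul_le_mul_of_nonneg_left hsum_le (by positivity)
      _ = (n:ℝ)⁻¹ * (K⁻¹ ^ n * K ^ (n-1)) * (∑ y, A y y)
          + L * ((K⁻¹ ^ n * K ^ (n-1)) * ∑ y, bad y) := by rw [htotal]; ring
      _ = (n:ℝ)⁻¹ * K⁻¹ * (∑ y, A y y) + L * (K⁻¹ * ∑ y, bad y) := by rw [hKpow]
      _ ≤ (n:ℝ)⁻¹ * K⁻¹ * (K * (n * Real.exp (-a))) + L * (2 * E) :=
          add_le_add (mul_le_mul_of_nonneg_left hAsum_le (by positivity))
            (mul_le_mul_of_nonneg_left hbadle hL0)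
      _ = Real.exp (-a) + 2 * L * E := by
          field_simp
  · -- degenerate case : t = 0
    have ht_eq : t = 0 := by rw [htdef]; exact max_eq_right (le_of_lt hcase)
    have hE1 : E = 1 := by
      rw [hEdef, ht_eq]
      norm_num
    have hsum_le : ∑ ys : Fin n → V, KL ((n : ℝ≥0∞)⁻¹ • ∑ i, W (ys i)) Q
        ≤ ∑ _ys : Fin n → V, L := Finset.sum_le_sum fun ys _ => (main ys).1
    have hcardfun : ((Fintype.card (Fin n → V) : ℕ) : ℝ) = K ^ n := by
      rw [Fintype.card_fun, Fintype.card_fin]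
      push_cast [hKdef]
      ring
    calc K⁻¹ ^ n * ∑ ys : Fin n → V, KL ((n : ℝ≥0∞)⁻¹ • ∑ i, W (ys i)) Q
        ≤ K⁻¹ ^ n * ∑ _ys : Fin n → V, L :=
          mul_le_mul_of_nonneg_left hsum_le (by positivity)
      _ = K⁻¹ ^ n * (K ^ n * L) := by
          rw [Finset.sum_const, Finset.card_univ, nsmul_eq_mul, hcardfun]
      _ = L := by
          rw [← mul_assoc, ← mul_pow, inv_mul_cancel₀ (ne_of_gt hKpos), one_pow, one_mul]
      _ ≤ Real.exp (-a) + 2 * L * E := by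
          rw [hE1]
          have := Real.exp_pos (-a)
          linarith
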